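/- There is an absolute constant K such that for all N, h ∈ ℕ with N ≥ 2, the correlation C_{Λ,Λ}(N,h) = ∑_{n ≤ N} Λ(n) Λ(n+h) satisfies |C_{Λ,Λ}(N,h) − C_{Λ,Λ_N}(N,h)| ≤ K · h · (log N) · log(N+h), where C_{Λ,Λ_N}(N,h) = ∑_{n ≤ N} Λ(n) Λ_N(n+h). -/

import Mathlib

open Finset

/-- The Ramanujan sum `c_q(n) = ∑_{1 ≤ j ≤ q, gcd(j,q)=1} exp(2πi j n / q)`. -/
noncomputable def cq (q : ℕ) (n : ℤ) : ℂ :=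
  ∑ j ∈ (Finset.Icc 1 q).filter (fun j => Nat.Coprime j q),
    Complex.exp (2 * Real.pi * Complex.I * j * n / q)

/-- The incomplete von Mangoldt function `Λ_N(n) = -∑_{d ≤ N, d ∣ n} μ(d) log d`. -/
noncomputable def LamN (N n : ℕ) : ℝ :=
  -∑ d ∈ (Finset.Icc 1 N).filter (fun d => d ∣ n),
    (ArithmeticFunction.moebius d : ℝ) * Real.log d

/-- The correlation `C_{Λ,Λ_N}(N, n) = ∑_{m ≤ N} Λ(m) Λ_N(m + n)`. -/
noncomputable def corr (N n : ℕ) : ℝ :=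
  ∑ m ∈ Finset.Icc 1 N, ArithmeticFunction.vonMangoldt m * LamN N (m + n)

/-- The Ramanujan coefficient `Λ̂_N(q) = -(μ(q)/q) ∑_{d ≤ N/q, gcd(d,q)=1} μ(d) log(dq)/d`. -/
noncomputable def LamHat (N q : ℕ) : ℝ :=
  -((ArithmeticFunction.moebius q : ℝ) / q) *
    ∑ d ∈ (Finset.Icc 1 (N / q)).filter (fun d => Nat.Coprime d q),
      (ArithmeticFunction.moebius d : ℝ) * Real.log (d * q) / d

/-- `ℤ_q^* = {m ∈ ℕ ∩ [1,q] : gcd(m,q) = 1}`. -/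
def Zstar (q : ℕ) : Finset ℕ := (Finset.Icc 1 q).filter (fun m => Nat.Coprime m q)

/-- `ψ(N; q, k) = ∑_{n ≤ N, n ≡ k (mod q)} Λ(n)`. -/
noncomputable def psi (N q k : ℕ) : ℝ :=
  ∑ n ∈ (Finset.Icc 1 N).filter (fun n => n % q = k % q),
    ArithmeticFunction.vonMangoldt n

/-- `δ(h; q, k) = c_q(k+h) - (μ(q)/φ(q)) c_q(h)`. -/
noncomputable def dev (h q k : ℕ) : ℂ :=
  cq q ((k : ℤ) + h) - (ArithmeticFunction.moebius q : ℂ) / (Nat.totient q : ℂ) * cq q h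

/-- `Δ(N, h) = ∑_{q ≤ N} Λ̂_N(q) ∑_{k ∈ ℤ_q^*} ψ(N;q,k) δ(h;q,k)`. -/
noncomputable def Delta (N h : ℕ) : ℂ :=
  ∑ q ∈ Finset.Icc 1 N, (LamHat N q : ℂ) *
    ∑ k ∈ Zstar q, (psi N q k : ℂ) * dev h q k

/-- `S_N(q, k; r) = ∑_{n ≤ N, n ≡ k (mod q)} c_r(n)`. -/
noncomputable def SN (N q : ℕ) (k : ℤ) (r : ℕ) : ℂ :=
  ∑ n ∈ (Finset.Icc 1 N).filter (fun n : ℕ => (n : ℤ) % (q : ℤ) = k % (q : ℤ)), cq r n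

/-- The full correlation `C_{Λ,Λ}(N,h) = ∑_{n ≤ N} Λ(n) Λ(n+h)`. -/
noncomputable def corrLL (N h : ℕ) : ℝ :=
  ∑ n ∈ Finset.Icc 1 N, ArithmeticFunction.vonMangoldt n * ArithmeticFunction.vonMangoldt (n + h)

open ArithmeticFunction
open scoped ArithmeticFunction.Moebius

lemma aux_add_div_le (a b c : ℕ) : (a + b) / c ≤ a / c + b / c + 1 := by
  rcases Nat.eq_zero_or_pos c with h | h
  · simp [h]
  · rw [Nat.add_div h]; split <;> omega

lemma aux_filter_eq (N n : ℕ) (hn : n ≠ 0) :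
    (Finset.Icc 1 N).filter (fun d => d ∣ n) = n.divisors.filter (fun d => d ≤ N) := by
  ext d
  simp only [mem_filter, mem_Icc, Nat.mem_divisors]
  constructor
  · rintro ⟨⟨h1, h2⟩, h3⟩; exact ⟨⟨h3, hn⟩, h2⟩
  · rintro ⟨⟨h1, -⟩, h2⟩
    exact ⟨⟨Nat.one_le_iff_ne_zero.2 (fun e => hn (by simpa [e] using h1)), h2⟩, h1⟩

lemma aux_diff (N n : ℕ) (hn : n ≠ 0) :
    ArithmeticFunction.vonMangoldt n - LamN N n
      = -∑ d ∈ n.divisors.filter (fun d => N < d), (moebius d : ℝ) * Real.log d := by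
  have h0 : (∑ d ∈ n.divisors, (μ d : ℝ) * Real.log d) = -Λ n :=
    ArithmeticFunction.sum_moebius_mul_log_eq
  have hsplit := Finset.sum_filter_add_sum_filter_not n.divisors (fun d => d ≤ N)
      (fun d => (μ d : ℝ) * Real.log d)
  have heq : n.divisors.filter (fun d => ¬ d ≤ N) = n.divisors.filter (fun d => N < d) := by
    simp [Nat.not_le]
  rw [heq] at hsplit
  rw [LamN, aux_filter_eq N n hn]
  linarith [hsplit, h0]

lemma aux_card_eq (N n : ℕ) :
    (n.divisors.filter (fun d => N < d)).card
      = (n.divisors.filter (fun e => N * e < n)).card := by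
  rw [Finset.card_filter, Finset.card_filter]
  have h := Nat.sum_div_divisors n (fun d => if N < d then (1:ℕ) else 0)
  rw [← h]
  refine Finset.sum_congr rfl (fun d hd => ?_)
  have hdvd : d ∣ n := (Nat.mem_divisors.1 hd).1
  have hiff : N < n / d ↔ d * N < n := Nat.lt_div_iff_mul_lt' hdvd N
  have hiff2 : N < n / d ↔ N * d < n := by rw [Nat.mul_comm]; exact hiff
  exact if_congr hiff2 rfl rfl

lemma aux_count_one (N h : ℕ) :
    (((Finset.Icc 1 N).filter (fun m => 1 ∣ m + h ∧ N * 1 < m + h)).card) ≤ h := by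
  have hsub : ((Finset.Icc 1 N).filter (fun m => 1 ∣ m + h ∧ N * 1 < m + h))
      ⊆ Finset.Icc (N + 1 - h) N := by
    intro m hm
    simp only [mem_filter, mem_Icc] at hm ⊢
    omega
  calc _ ≤ (Finset.Icc (N + 1 - h) N).card := Finset.card_le_card hsub
    _ ≤ h := by rw [Nat.card_Icc]; omega

lemma aux_count_e (N h e : ℕ) (he : 1 ≤ e) :
    (((Finset.Icc 1 N).filter (fun m => e ∣ m + h ∧ N * e < m + h)).card)
      ≤ (N - 1) / e + 2 := by
  rcases Nat.eq_zero_or_pos N with h0 | hN1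
  · simp [h0, Finset.Icc_eq_empty_of_lt]
  have hmaps : ∀ m ∈ (Finset.Icc 1 N).filter (fun m => e ∣ m + h ∧ N * e < m + h),
      (m + h) / e ∈ Finset.Icc ((1 + h) / e) ((N + h) / e) := by
    intro m hm
    simp only [mem_filter, mem_Icc] at hm ⊢
    exact ⟨Nat.div_le_div_right (by omega), Nat.div_le_div_right (by omega)⟩
  have hinj : ∀ m ∈ (Finset.Icc 1 N).filter (fun m => e ∣ m + h ∧ N * e < m + h),
      ∀ m' ∈ (Finset.Icc 1 N).filter (fun m => e ∣ m + h ∧ N * e < m + h),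
      (m + h) / e = (m' + h) / e → m = m' := by
    intro m hm m' hm' heq
    simp only [mem_filter] at hm hm'
    have h1 : (m + h) / e * e = m + h := Nat.div_mul_cancel hm.2.1
    have h2 : (m' + h) / e * e = m' + h := Nat.div_mul_cancel hm'.2.1
    rw [heq] at h1
    omega
  have hcard := Finset.card_le_card_of_injOn _ hmaps hinj
  have hIcc : (Finset.Icc ((1 + h) / e) ((N + h) / e)).card
      = (N + h) / e + 1 - (1 + h) / e := Nat.card_Icc _ _
  have hmono : (1 + h) / e ≤ (N + h) / e := Nat.div_le_div_right (by omega)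
  have hdiv : (N + h) / e ≤ (N - 1) / e + (1 + h) / e + 1 := by
    have heq2 : (N - 1) + (1 + h) = N + h := by omega
    calc (N + h) / e = ((N - 1) + (1 + h)) / e := by rw [heq2]
      _ ≤ (N - 1) / e + (1 + h) / e + 1 := aux_add_div_le _ _ _
  omega

lemma aux_count (N h : ℕ) (hN : 2 ≤ N) (hh : 1 ≤ h) :
    ∑ m ∈ Finset.Icc 1 N, ((m + h).divisors.filter (fun e => N * e < m + h)).card ≤ 4 * h := by
  obtain ⟨q, r, hqr, hr⟩ : ∃ q r, h = N * q + r ∧ r < N :=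
    ⟨h / N, h % N, (Nat.div_add_mod h N).symm, Nat.mod_lt _ (by omega)⟩
  have key : ∀ m ∈ Finset.Icc 1 N,
      (m + h).divisors.filter (fun e => N * e < m + h)
        = (Finset.Icc 1 (1 + q)).filter (fun e => e ∣ m + h ∧ N * e < m + h) := by
    intro m hm
    simp only [mem_Icc] at hm
    ext e
    simp only [mem_filter, Nat.mem_divisors, mem_Icc]
    constructor
    · rintro ⟨⟨hdvd, hne⟩, hlt⟩
      refine ⟨⟨Nat.one_le_iff_ne_zero.2 ?_, ?_⟩, hdvd, hlt⟩
      · rintro rfl; rw [Nat.zero_dvd] at hdvd; omega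
      · by_contra hcon
        push_neg at hcon
        have h2 : q + 2 ≤ e := by omega
        have h3 : N * (q + 2) ≤ N * e := Nat.mul_le_mul_left N h2
        have h4 : N * (q + 2) = N * q + N * 2 := by ring
        omega
    · rintro ⟨⟨-, -⟩, hdvd, hlt⟩
      exact ⟨⟨hdvd, by omega⟩, hlt⟩
  have hq_le : q * N ≤ h := by rw [mul_comm]; omega
  have hq_le_h : q ≤ h := by
    have : q ≤ N * q := Nat.le_mul_of_pos_left q (by omega)
    omega
  calc ∑ m ∈ Finset.Icc 1 N, ((m + h).divisors.filter (fun e => N * e < m + h)).card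
      = ∑ m ∈ Finset.Icc 1 N,
          ((Finset.Icc 1 (1 + q)).filter (fun e => e ∣ m + h ∧ N * e < m + h)).card :=
        Finset.sum_congr rfl (fun m hm => by rw [key m hm])
    _ = ∑ m ∈ Finset.Icc 1 N, ∑ e ∈ Finset.Icc 1 (1 + q),
          (if e ∣ m + h ∧ N * e < m + h then 1 else 0) := by
        refine Finset.sum_congr rfl (fun m _ => ?_); rw [Finset.card_filter]
    _ = ∑ e ∈ Finset.Icc 1 (1 + q), ∑ m ∈ Finset.Icc 1 N,
          (if e ∣ m + h ∧ N * e < m + h then 1 else 0) := Finset.sum_comm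
    _ = ∑ e ∈ Finset.Icc 1 (1 + q),
          ((Finset.Icc 1 N).filter (fun m => e ∣ m + h ∧ N * e < m + h)).card := by
        refine Finset.sum_congr rfl (fun e _ => ?_); rw [Finset.card_filter]
    _ ≤ 4 * h := by
        have hEi : Finset.Icc 1 (1 + q) = insert 1 (Finset.Icc 2 (1 + q)) := by
          ext x; simp only [mem_insert, mem_Icc]; omega
        rw [hEi, Finset.sum_insert (by simp)]
        have h1 : ((Finset.Icc 1 N).filter (fun m => 1 ∣ m + h ∧ N * 1 < m + h)).card ≤ h :=
          aux_count_one N h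
        have h2 : ∑ e ∈ Finset.Icc 2 (1 + q),
            ((Finset.Icc 1 N).filter (fun m => e ∣ m + h ∧ N * e < m + h)).card
            ≤ q * ((N - 1) / 2 + 2) := by
          have hb := Finset.sum_le_card_nsmul (Finset.Icc 2 (1 + q))
            (fun e => ((Finset.Icc 1 N).filter (fun m => e ∣ m + h ∧ N * e < m + h)).card)
            ((N - 1) / 2 + 2)
            (fun e he => by
              simp only [mem_Icc] at he
              calc _ ≤ (N - 1) / e + 2 := aux_count_e N h e (by omega)
                _ ≤ (N - 1) / 2 + 2 :=
                  Nat.add_le_add_right (Nat.div_le_div_left he.1 (by omega)) 2)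
          have hcardIcc : (Finset.Icc 2 (1 + q)).card = q := by rw [Nat.card_Icc]; omega
          rw [hcardIcc, smul_eq_mul] at hb
          exact hb
        have h3 : q * ((N - 1) / 2 + 2) ≤ 3 * h := by
          have ha : q * ((N - 1) / 2) ≤ q * N := by
            refine Nat.mul_le_mul_left q ?_
            have := Nat.div_le_self (N - 1) 2
            omega
          have hmul : q * ((N - 1) / 2 + 2) = q * ((N - 1) / 2) + q * 2 := by ring
          omega
        omega


/-- `|C_{Λ,Λ}(N,h) − C_{Λ,Λ_N}(N,h)| ≤ K h (log N) log(N+h)`. -/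
theorem stmt7 : ∃ K : ℝ, ∀ N h : ℕ, 2 ≤ N → 1 ≤ h →
    |corrLL N h - corr N h| ≤ K * h * Real.log N * Real.log ((N : ℝ) + h) := by
  use 4
  intro N h hN hh
  have hN1 : (1:ℝ) ≤ N := by exact_mod_cast Nat.one_le_of_lt hN
  have hh0 : (0:ℝ) ≤ h := Nat.cast_nonneg h
  have hlogN : 0 ≤ Real.log N := Real.log_nonneg hN1
  have hlogNh : 0 ≤ Real.log ((N : ℝ) + h) := Real.log_nonneg (by linarith)
  -- rewrite the difference
  have hdiff : corrLL N h - corr N h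
      = ∑ m ∈ Finset.Icc 1 N, Λ m *
          (-∑ d ∈ (m + h).divisors.filter (fun d => N < d), (μ d : ℝ) * Real.log d) := by
    rw [corrLL, corr, ← Finset.sum_sub_distrib]
    refine Finset.sum_congr rfl (fun m hm => ?_)
    simp only [mem_Icc] at hm
    rw [← mul_sub, aux_diff N (m + h) (by omega)]
  rw [hdiff]
  -- per-term bound
  have hterm : ∀ m ∈ Finset.Icc 1 N,
      |Λ m * (-∑ d ∈ (m + h).divisors.filter (fun d => N < d), (μ d : ℝ) * Real.log d)|
        ≤ Real.log N * Real.log ((N : ℝ) + h)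
            * ((m + h).divisors.filter (fun d => N < d)).card := by
    intro m hm
    simp only [mem_Icc] at hm
    have hLam : (0:ℝ) ≤ Λ m := vonMangoldt_nonneg
    have hLamle : Λ m ≤ Real.log N := by
      refine vonMangoldt_le_log.trans ?_
      exact Real.log_le_log (by exact_mod_cast hm.1) (by exact_mod_cast hm.2)
    rw [abs_mul, abs_neg, abs_of_nonneg hLam]
    have hsum : |∑ d ∈ (m + h).divisors.filter (fun d => N < d), (μ d : ℝ) * Real.log d|
        ≤ ((m + h).divisors.filter (fun d => N < d)).card * Real.log ((N : ℝ) + h) := by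
      refine (Finset.abs_sum_le_sum_abs _ _).trans ?_
      rw [Finset.card_eq_sum_ones, Nat.cast_sum, Finset.sum_mul]
      refine Finset.sum_le_sum (fun d hd => ?_)
      simp only [mem_filter, Nat.mem_divisors] at hd
      have hd1 : 1 ≤ d := Nat.one_le_iff_ne_zero.2
        (fun e => hd.1.2 (by simpa [e] using hd.1.1))
      have hdle : (d:ℝ) ≤ (N:ℝ) + h := by
        have := Nat.le_of_dvd (by omega) hd.1.1
        push_cast
        have : (d:ℝ) ≤ (m:ℝ) + h := by exact_mod_cast this
        have hmN : (m:ℝ) ≤ N := by exact_mod_cast hm.2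
        linarith
      have hlogd : (0:ℝ) ≤ Real.log d := Real.log_nonneg (by exact_mod_cast hd1)
      have hmu : |(μ d : ℝ)| ≤ 1 := by
        have : |μ d| ≤ 1 := by
          by_cases hs : Squarefree d
          · rw [abs_moebius_eq_one_of_squarefree hs]
          · simp [moebius_eq_zero_of_not_squarefree hs]
        calc |(μ d : ℝ)| = ((|μ d| : ℤ) : ℝ) := by push_cast; ring
          _ ≤ 1 := by exact_mod_cast this
      calc |(μ d : ℝ) * Real.log d| = |(μ d : ℝ)| * |Real.log d| := abs_mul _ _
        _ ≤ 1 * Real.log ((N:ℝ) + h) := by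
            rw [abs_of_nonneg hlogd]
            exact mul_le_mul hmu (Real.log_le_log (by exact_mod_cast hd1) hdle)
              hlogd (le_trans (abs_nonneg _) hmu)
        _ = ((1:ℕ):ℝ) * Real.log ((N:ℝ) + h) := by norm_num
    calc Λ m * |∑ d ∈ (m + h).divisors.filter (fun d => N < d), (μ d : ℝ) * Real.log d|
        ≤ Real.log N * (((m + h).divisors.filter (fun d => N < d)).card
            * Real.log ((N : ℝ) + h)) := by
          refine mul_le_mul hLamle hsum (abs_nonneg _) hlogN
      _ = Real.log N * Real.log ((N : ℝ) + h)
            * ((m + h).divisors.filter (fun d => N < d)).card := by ring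
  -- assemble
  calc |∑ m ∈ Finset.Icc 1 N, Λ m *
          (-∑ d ∈ (m + h).divisors.filter (fun d => N < d), (μ d : ℝ) * Real.log d)|
      ≤ ∑ m ∈ Finset.Icc 1 N, |Λ m *
          (-∑ d ∈ (m + h).divisors.filter (fun d => N < d), (μ d : ℝ) * Real.log d)| :=
        Finset.abs_sum_le_sum_abs _ _
    _ ≤ ∑ m ∈ Finset.Icc 1 N, Real.log N * Real.log ((N : ℝ) + h)
          * ((m + h).divisors.filter (fun d => N < d)).card :=
        Finset.sum_le_sum hterm
    _ = Real.log N * Real.log ((N : ℝ) + h)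
          * ∑ m ∈ Finset.Icc 1 N,
              (((m + h).divisors.filter (fun d => N < d)).card : ℝ) := by
        rw [Finset.mul_sum]
    _ ≤ Real.log N * Real.log ((N : ℝ) + h) * (4 * h) := by
        refine mul_le_mul_of_nonneg_left ?_ (mul_nonneg hlogN hlogNh)
        have hcount : ∑ m ∈ Finset.Icc 1 N,
            ((m + h).divisors.filter (fun d => N < d)).card ≤ 4 * h := by
          calc ∑ m ∈ Finset.Icc 1 N, ((m + h).divisors.filter (fun d => N < d)).card
              = ∑ m ∈ Finset.Icc 1 N,
                  ((m + h).divisors.filter (fun e => N * e < m + h)).card :=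
                Finset.sum_congr rfl (fun m _ => aux_card_eq N (m + h))
            _ ≤ 4 * h := aux_count N h hN hh
        calc ∑ m ∈ Finset.Icc 1 N,
              (((m + h).divisors.filter (fun d => N < d)).card : ℝ)
            = ((∑ m ∈ Finset.Icc 1 N,
                ((m + h).divisors.filter (fun d => N < d)).card : ℕ) : ℝ) := by
              push_cast; ring
          _ ≤ ((4 * h : ℕ) : ℝ) := by exact_mod_cast hcount
          _ = 4 * h := by push_cast; ring
    _ = 4 * h * Real.log N * Real.log ((N : ℝ) + h) := by ring
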